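/- Let N ≥ 1 and let p_1,...,p_{N+1} be reals with 0 ≤ p_1 ≤ ... ≤ p_{N+1}. Define q_j = min(p_j, 1), s_j(n,i) = p_j·n − q_j·i + c_j for arbitrary reals c_j. Let f̃^n_i be the ultradiscrete permanent of the N×N matrix whose (j,m) entry (m = 1,...,N) is |s_j(n + 2(m−1), i)|, and let g̃^n_i be the ultradiscrete permanent of the (N+1)×(N+1) matrix whose (j,m) entry (m = 1,...,N+1) is |s_j(n + 2(m−2), i)|. Then for all real n, i: f̃^n_i + g̃^{n+1}_{i−1} = max( f̃^{n+1}_{i−1} + g̃^n_i − p_{N+1} + q_{N+1} − 2, f̃^{n−1}_{i−1} + g̃^{n+2}_i − p_{N+1} + q_{N+1} ). (This is the equation obtained by formally ultradiscretizing the second Bäcklund transformation of the discrete KdV equation, and it is equivalent to the ultradiscrete KdV Bäcklund transformation f̃^n_i + g̃^{n+1}_{i−1} = max( f̃^{n+1}_{i−1} + g̃^n_i − p_{N+1} − q_{N+1}, f̃^{n−1}_{i−1} + g̃^{n+2}_i − p_{N+1} + q_{N+1} ).) -/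

import Mathlib

open Finset

/-- The ultradiscrete permanent of an `M × M` real matrix:
the maximum over all permutations `π` of `Σ_j a j (π j)`. -/
noncomputable def uperm (M : ℕ) (a : Fin M → Fin M → ℝ) : ℝ :=
  Finset.univ.sup' Finset.univ_nonempty fun π : Equiv.Perm (Fin M) => ∑ j, a j (π j)

namespace UKdV

lemma le_uperm {M : ℕ} (A : Fin M → Fin M → ℝ) (π : Equiv.Perm (Fin M)) :
    ∑ j, A j (π j) ≤ uperm M A :=
  Finset.le_sup' (fun π : Equiv.Perm (Fin M) => ∑ j, A j (π j)) (Finset.mem_univ π)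

lemma uperm_le {M : ℕ} {A : Fin M → Fin M → ℝ} {z : ℝ}
    (h : ∀ π : Equiv.Perm (Fin M), ∑ j, A j (π j) ≤ z) : uperm M A ≤ z :=
  Finset.sup'_le _ _ fun π _ => h π

lemma uperm_zero (A : Fin 0 → Fin 0 → ℝ) : uperm 0 A = 0 := by
  refine le_antisymm (uperm_le fun π => by simp) ?_
  have := le_uperm A 1
  simpa using this

/-- The greedy value function: rows `0..r-1` with intercepts `a`, slopes `b`
(sorted increasing), columns `u, u+2, ..., u+2(r-1)`. -/
noncomputable def G (a b : ℕ → ℝ) : ℕ → ℝ → ℝ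
  | 0, _ => 0
  | (r+1), u => max (a r + (u + 2*(r:ℝ)) * b r + G a b r u)
                    (-(a r + u * b r) + G a b r (u+2))

/-- extend a permutation of `Fin M` to `Fin (M+1)` fixing `last`. -/
noncomputable def extR {M : ℕ} (σ : Equiv.Perm (Fin M)) : Equiv.Perm (Fin (M+1)) :=
  Equiv.ofBijective (Fin.lastCases (Fin.last M) (fun j => (σ j).castSucc)) (by
    rw [← Finite.injective_iff_bijective]
    intro x y hxy
    rcases Fin.eq_castSucc_or_eq_last x with ⟨x', rfl⟩ | rfl <;>
      rcases Fin.eq_castSucc_or_eq_last y with ⟨y', rfl⟩ | rfl <;>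
      simp only [Fin.lastCases_castSucc, Fin.lastCases_last] at hxy
    · rw [Fin.castSucc_inj] at hxy; rw [σ.injective hxy]
    · exact absurd hxy (Fin.castSucc_lt_last _).ne
    · exact absurd hxy.symm (Fin.castSucc_lt_last _).ne
    · rfl)

lemma extR_castSucc {M : ℕ} (σ : Equiv.Perm (Fin M)) (j : Fin M) :
    extR σ j.castSucc = (σ j).castSucc := by
  simp [extR, Equiv.ofBijective_apply, Fin.lastCases_castSucc]

lemma extR_last {M : ℕ} (σ : Equiv.Perm (Fin M)) :
    extR σ (Fin.last M) = Fin.last M := by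
  simp [extR, Equiv.ofBijective_apply, Fin.lastCases_last]

/-- extend a permutation of `Fin M` to `Fin (M+1)` sending `last` to `0`,
`castSucc j` to `succ (σ j)`. -/
noncomputable def extL {M : ℕ} (σ : Equiv.Perm (Fin M)) : Equiv.Perm (Fin (M+1)) :=
  Equiv.ofBijective (Fin.lastCases 0 (fun j => (σ j).succ)) (by
    rw [← Finite.injective_iff_bijective]
    intro x y hxy
    rcases Fin.eq_castSucc_or_eq_last x with ⟨x', rfl⟩ | rfl <;>
      rcases Fin.eq_castSucc_or_eq_last y with ⟨y', rfl⟩ | rfl <;>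
      simp only [Fin.lastCases_castSucc, Fin.lastCases_last] at hxy
    · rw [Fin.succ_inj] at hxy; rw [σ.injective hxy]
    · exact absurd hxy (Fin.succ_ne_zero _)
    · exact absurd hxy.symm (Fin.succ_ne_zero _)
    · rfl)

lemma extL_castSucc {M : ℕ} (σ : Equiv.Perm (Fin M)) (j : Fin M) :
    extL σ j.castSucc = (σ j).succ := by
  simp [extL, Equiv.ofBijective_apply, Fin.lastCases_castSucc]

lemma extL_last {M : ℕ} (σ : Equiv.Perm (Fin M)) :
    extL σ (Fin.last M) = 0 := by
  simp [extL, Equiv.ofBijective_apply, Fin.lastCases_last]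

lemma uperm_peel_right {M : ℕ} (A : Fin (M+1) → Fin (M+1) → ℝ) :
    A (Fin.last M) (Fin.last M) + uperm M (fun j m => A j.castSucc m.castSucc)
      ≤ uperm (M+1) A := by
  obtain ⟨σ, -, hσ⟩ := Finset.exists_mem_eq_sup' (Finset.univ_nonempty)
    (fun π : Equiv.Perm (Fin M) => ∑ j, (fun j m => A j.castSucc m.castSucc) j (π j))
  rw [show uperm M (fun j m => A j.castSucc m.castSucc) = _ from hσ]
  have := le_uperm A (extR σ)
  rw [Fin.sum_univ_castSucc (fun j => A j (extR σ j))] at this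
  simp only [extR_castSucc, extR_last] at this
  linarith

lemma uperm_peel_left {M : ℕ} (A : Fin (M+1) → Fin (M+1) → ℝ) :
    A (Fin.last M) 0 + uperm M (fun j m => A j.castSucc m.succ)
      ≤ uperm (M+1) A := by
  obtain ⟨σ, -, hσ⟩ := Finset.exists_mem_eq_sup' (Finset.univ_nonempty)
    (fun π : Equiv.Perm (Fin M) => ∑ j, (fun j m => A j.castSucc m.succ) j (π j))
  rw [show uperm M (fun j m => A j.castSucc m.succ) = _ from hσ]
  have := le_uperm A (extL σ)
  rw [Fin.sum_univ_castSucc (fun j => A j (extL σ j))] at this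
  simp only [extL_castSucc, extL_last] at this
  linarith

/-- swapping two sources in a sum over a permutation -/
lemma sum_comp_swap {M : ℕ} (F : Fin M → Fin M → ℝ) (τ : Equiv.Perm (Fin M))
    {i k : Fin M} (hik : i ≠ k) :
    ∑ j, F j ((τ * Equiv.swap i k) j)
      = ∑ j, F j (τ j) + (F i (τ k) + F k (τ i)) - (F i (τ i) + F k (τ k)) := by
  have key : ∑ j, (F j ((τ * Equiv.swap i k) j) - F j (τ j))
      = (F i (τ k) - F i (τ i)) + (F k (τ i) - F k (τ k)) := by
    have h0 : ∀ j ∈ (Finset.univ : Finset (Fin M)), j ∉ ({i, k} : Finset (Fin M)) →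
        F j ((τ * Equiv.swap i k) j) - F j (τ j) = 0 := by
      intro j _ hj
      simp only [Finset.mem_insert, Finset.mem_singleton, not_or] at hj
      rw [Equiv.Perm.mul_apply, Equiv.swap_apply_of_ne_of_ne hj.1 hj.2, sub_self]
    rw [← Finset.sum_subset (Finset.subset_univ ({i,k} : Finset (Fin M))) h0,
      Finset.sum_pair hik]
    simp [Equiv.swap_apply_left, Equiv.swap_apply_right]
  have := Finset.sum_sub_distrib (s := (Finset.univ : Finset (Fin M)))
    (f := fun j => F j ((τ * Equiv.swap i k) j)) (g := fun j => F j (τ j))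
  rw [this] at key
  linarith


section Greedy
variable (a b : ℕ → ℝ)

lemma signed_le (hb0 : ∀ j, 0 ≤ b j) (hmono : ∀ i j : ℕ, i ≤ j → b i ≤ b j) :
    ∀ (M : ℕ) (u : ℝ) (τ : Equiv.Perm (Fin M)) (s : Fin M → ℝ),
      (∀ j, s j = 1 ∨ s j = -1) →
      ∑ j : Fin M, s j * (a j + (u + 2*((τ j : ℕ) : ℝ)) * b j) ≤ G a b M u := by
  intro M
  induction M with
  | zero => intro u τ s hs; simp [G]
  | succ M ih =>
    intro u τ s hs
    set F : Fin (M+1) → Fin (M+1) → ℝ :=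
      fun j m => s j * (a j + (u + 2*((m : ℕ) : ℝ)) * b j) with hF
    have hFle : ∀ (ρ : Equiv.Perm (Fin (M+1))), ρ (Fin.last M) = Fin.last M →
        s (Fin.last M) = 1 → ∑ j, F j (ρ j) ≤ G a b (M+1) u := by
      intro ρ hρ hsl
      -- peel at the right end
      have hne : ∀ j : Fin M, ρ j.castSucc ≠ Fin.last M := by
        intro j h
        have := ρ.injective (h.trans hρ.symm)
        exact absurd this (Fin.castSucc_lt_last j).ne
      have hinj : Function.Injective (fun j : Fin M => (ρ j.castSucc).castPred (hne j)) := by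
        intro j1 j2 h12
        have : ρ j1.castSucc = ρ j2.castSucc := by
          have := congrArg Fin.castSucc h12
          rwa [Fin.castSucc_castPred, Fin.castSucc_castPred] at this
        exact Fin.castSucc_inj.mp (ρ.injective this)
      set ρ' : Equiv.Perm (Fin M) :=
        Equiv.ofBijective _ (Finite.injective_iff_bijective.mp hinj) with hρ'
      have hρ'app : ∀ j : Fin M, ρ j.castSucc = (ρ' j).castSucc := by
        intro j
        rw [hρ', Equiv.ofBijective_apply, Fin.castSucc_castPred]
      rw [Fin.sum_univ_castSucc (fun j => F j (ρ j))]
      have hmain : ∑ j : Fin M, F j.castSucc (ρ j.castSucc) ≤ G a b M u := by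
        have := ih u ρ' (fun j => s j.castSucc) (fun j => hs j.castSucc)
        refine le_trans (le_of_eq ?_) this
        refine Finset.sum_congr rfl fun j _ => ?_
        rw [hρ'app j, hF]
        simp
      have hlast : F (Fin.last M) (ρ (Fin.last M))
          = a M + (u + 2*(M:ℝ)) * b M := by
        rw [hρ, hF]
        simp only [hsl, Fin.val_last, one_mul]
      rw [hlast]
      have : G a b (M+1) u = max (a M + (u + 2*(M:ℝ)) * b M + G a b M u)
          (-(a M + u * b M) + G a b M (u+2)) := rfl
      rw [this]
      refine le_trans ?_ (le_max_left _ _)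
      linarith
    have hFle0 : ∀ (ρ : Equiv.Perm (Fin (M+1))), ρ (Fin.last M) = 0 →
        s (Fin.last M) = -1 → ∑ j, F j (ρ j) ≤ G a b (M+1) u := by
      intro ρ hρ hsl
      have hne : ∀ j : Fin M, ρ j.castSucc ≠ 0 := by
        intro j h
        have := ρ.injective (h.trans hρ.symm)
        exact absurd this (Fin.castSucc_lt_last j).ne
      have hinj : Function.Injective (fun j : Fin M => (ρ j.castSucc).pred (hne j)) := by
        intro j1 j2 h12
        have : ρ j1.castSucc = ρ j2.castSucc := by
          have := congrArg Fin.succ h12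
          rwa [Fin.succ_pred, Fin.succ_pred] at this
        exact Fin.castSucc_inj.mp (ρ.injective this)
      set ρ' : Equiv.Perm (Fin M) :=
        Equiv.ofBijective _ (Finite.injective_iff_bijective.mp hinj) with hρ'
      have hρ'app : ∀ j : Fin M, ρ j.castSucc = (ρ' j).succ := by
        intro j
        rw [hρ', Equiv.ofBijective_apply, Fin.succ_pred]
      rw [Fin.sum_univ_castSucc (fun j => F j (ρ j))]
      have hmain : ∑ j : Fin M, F j.castSucc (ρ j.castSucc) ≤ G a b M (u+2) := by
        have := ih (u+2) ρ' (fun j => s j.castSucc) (fun j => hs j.castSucc)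
        refine le_trans (le_of_eq ?_) this
        refine Finset.sum_congr rfl fun j _ => ?_
        rw [hρ'app j, hF]
        simp only [Fin.coe_castSucc, Fin.val_succ]
        push_cast
        ring_nf
      have hlast : F (Fin.last M) (ρ (Fin.last M)) = -(a M + u * b M) := by
        rw [hρ, hF]
        simp only [hsl, Fin.val_last, Fin.val_zero, neg_one_mul, Nat.cast_zero]
        ring_nf
      rw [hlast]
      have : G a b (M+1) u = max (a M + (u + 2*(M:ℝ)) * b M + G a b M u)
          (-(a M + u * b M) + G a b M (u+2)) := rfl
      rw [this]
      refine le_trans ?_ (le_max_right _ _)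
      linarith
    -- now the swap step
    rcases hs (Fin.last M) with hsl | hsl
    · -- positive sign at top row: swap its column with `last`
      set j0 := τ.symm (Fin.last M) with hj0
      by_cases hj : j0 = Fin.last M
      · have hτ : τ j0 = Fin.last M := by rw [hj0]; exact τ.apply_symm_apply _
        exact hFle τ (hj ▸ hτ) hsl
      · set ρ := τ * Equiv.swap j0 (Fin.last M) with hρdef
        have hρlast : ρ (Fin.last M) = Fin.last M := by
          rw [hρdef]
          simp only [Equiv.Perm.mul_apply, Equiv.swap_apply_right]
          rw [hj0]; simp
        have hτj0 : τ j0 = Fin.last M := by rw [hj0]; simp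
        have hswap := UKdV.sum_comp_swap F τ hj
        have hgain : F j0 (τ (Fin.last M)) + F (Fin.last M) (τ j0)
            ≥ F j0 (τ j0) + F (Fin.last M) (τ (Fin.last M)) := by
          rw [hτj0, hF]
          have hmM : ((τ (Fin.last M) : ℕ) : ℝ) ≤ (M : ℝ) := by
            exact_mod_cast Fin.is_le (τ (Fin.last M))
          have hbj0 : b (j0 : ℕ) ≤ b M := hmono _ _ (Fin.is_le j0)
          have hb0' : 0 ≤ b (j0 : ℕ) := hb0 _
          rcases hs j0 with h1 | h1 <;>
            simp only [h1, hsl, Fin.val_last, one_mul, neg_one_mul] <;> nlinarith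
        calc ∑ j, F j (τ j) ≤ ∑ j, F j (ρ j) := by rw [hρdef, hswap]; linarith
        _ ≤ G a b (M+1) u := hFle ρ hρlast hsl
    · -- negative sign at top row: swap its column with `0`
      set j1 := τ.symm 0 with hj1
      by_cases hj : j1 = Fin.last M
      · have hτ : τ j1 = 0 := by rw [hj1]; exact τ.apply_symm_apply _
        exact hFle0 τ (hj ▸ hτ) hsl
      · set ρ := τ * Equiv.swap j1 (Fin.last M) with hρdef
        have hρlast : ρ (Fin.last M) = 0 := by
          rw [hρdef]
          simp only [Equiv.Perm.mul_apply, Equiv.swap_apply_right]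
          rw [hj1]; simp
        have hτj1 : τ j1 = 0 := by rw [hj1]; simp
        have hswap := UKdV.sum_comp_swap F τ hj
        have hgain : F j1 (τ (Fin.last M)) + F (Fin.last M) (τ j1)
            ≥ F j1 (τ j1) + F (Fin.last M) (τ (Fin.last M)) := by
          rw [hτj1, hF]
          have hm0 : (0:ℝ) ≤ ((τ (Fin.last M) : ℕ) : ℝ) := by positivity
          have hbj1 : b (j1 : ℕ) ≤ b M := hmono _ _ (Fin.is_le j1)
          have hb1' : 0 ≤ b (j1 : ℕ) := hb0 _
          rcases hs j1 with h1 | h1 <;>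
            simp only [h1, hsl, Fin.val_last, Fin.val_zero, one_mul, neg_one_mul] <;>
            push_cast <;> nlinarith
        calc ∑ j, F j (τ j) ≤ ∑ j, F j (ρ j) := by rw [hρdef, hswap]; linarith
        _ ≤ G a b (M+1) u := hFle0 ρ hρlast hsl

lemma uperm_eq_G (a b : ℕ → ℝ) (hb0 : ∀ j, 0 ≤ b j) (hmono : ∀ i j : ℕ, i ≤ j → b i ≤ b j) :
    ∀ (M : ℕ) (u : ℝ),
      uperm M (fun j m => |a (j:ℕ) + (u + 2*((m:ℕ):ℝ)) * b (j:ℕ)|) = G a b M u := by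
  intro M
  induction M with
  | zero => intro u; rw [uperm_zero]; rfl
  | succ M ih =>
    intro u
    refine le_antisymm ?_ ?_
    · refine uperm_le fun τ => ?_
      set s : Fin (M+1) → ℝ :=
        fun j => if 0 ≤ a (j:ℕ) + (u + 2*(((τ j):ℕ):ℝ)) * b (j:ℕ) then 1 else -1 with hs
      have habs : ∀ j : Fin (M+1),
          |a (j:ℕ) + (u + 2*(((τ j):ℕ):ℝ)) * b (j:ℕ)|
            = s j * (a (j:ℕ) + (u + 2*(((τ j):ℕ):ℝ)) * b (j:ℕ)) := by
        intro j
        rw [hs]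
        by_cases h : 0 ≤ a (j:ℕ) + (u + 2*(((τ j):ℕ):ℝ)) * b (j:ℕ)
        · simp only [h, if_true, one_mul, abs_of_nonneg h]
        · simp only [h, if_false, neg_one_mul, abs_of_neg (lt_of_not_ge h)]
      calc ∑ j : Fin (M+1), |a (j:ℕ) + (u + 2*(((τ j):ℕ):ℝ)) * b (j:ℕ)|
          = ∑ j : Fin (M+1), s j * (a (j:ℕ) + (u + 2*(((τ j):ℕ):ℝ)) * b (j:ℕ)) :=
            Finset.sum_congr rfl fun j _ => habs j
        _ ≤ G a b (M+1) u := signed_le a b hb0 hmono (M+1) u τ s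
            (fun j => by rw [hs]; by_cases h : 0 ≤ a (j:ℕ) + (u + 2*(((τ j):ℕ):ℝ)) * b (j:ℕ) <;>
              simp [h])
    · have hGdef : G a b (M+1) u = max (a M + (u + 2*(M:ℝ)) * b M + G a b M u)
          (-(a M + u * b M) + G a b M (u+2)) := rfl
      rw [hGdef]
      set A : Fin (M+1) → Fin (M+1) → ℝ :=
        fun j m => |a (j:ℕ) + (u + 2*((m:ℕ):ℝ)) * b (j:ℕ)| with hA
      refine max_le ?_ ?_
      · have hminor : uperm M (fun j m => A j.castSucc m.castSucc) = G a b M u := by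
          rw [← ih u]
          congr 1
        have hpeel := uperm_peel_right A
        have hAll : a M + (u + 2*(M:ℝ)) * b M ≤ A (Fin.last M) (Fin.last M) := by
          rw [hA]
          simp only [Fin.val_last]
          exact le_abs_self _
        rw [hminor] at hpeel
        linarith
      · have hminor : uperm M (fun j m => A j.castSucc m.succ) = G a b M (u+2) := by
          rw [← ih (u+2)]
          congr 1
          funext j m
          rw [hA]
          simp only [Fin.coe_castSucc, Fin.val_succ]
          congr 1
          push_cast
          ring
        have hpeel := uperm_peel_left A
        have hAll : -(a M + u * b M) ≤ A (Fin.last M) 0 := by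
          rw [hA]
          simp only [Fin.val_last, Fin.val_zero, Nat.cast_zero, mul_zero, add_zero]
          exact neg_le_abs _
        rw [hminor] at hpeel
        linarith

end Greedy

lemma max_add_max_le {A B C D X : ℝ} (h1 : A + C ≤ X) (h2 : A + D ≤ X)
    (h3 : B + C ≤ X) (h4 : B + D ≤ X) : max A B + max C D ≤ X := by
  rcases max_cases A B with ⟨h,-⟩|⟨h,-⟩ <;> rcases max_cases C D with ⟨h',-⟩|⟨h',-⟩ <;>
    rw [h, h'] <;> assumption

/-- coefficient for the key inequalities -/
noncomputable def Dd (d : ℕ → ℝ) : ℕ → ℝ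
  | 0 => 0
  | (r+1) => d r

lemma Dd_le {d : ℕ → ℝ} (hd0 : ∀ j, 0 ≤ d j) (hdm : ∀ i j : ℕ, i ≤ j → d i ≤ d j) :
    ∀ r, Dd d r ≤ d r
  | 0 => hd0 0
  | (r+1) => hdm r (r+1) (Nat.le_succ r)

lemma Dd_nonneg {d : ℕ → ℝ} (hd0 : ∀ j, 0 ≤ d j) : ∀ r, 0 ≤ Dd d r
  | 0 => le_refl 0
  | (r+1) => hd0 r

section Keys
variable (a e b : ℕ → ℝ)

lemma Akey (hd0 : ∀ j, 0 ≤ b j - e j)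
    (hdm : ∀ i j : ℕ, i ≤ j → b i - e i ≤ b j - e j) :
    ∀ (r k : ℕ) (u : ℝ),
      G a b r (u + 2*(k:ℝ)) + G (fun j => a j + e j) b r (u - 1)
        ≤ G a b r u + G (fun j => a j + e j) b r (u + 2*(k:ℝ) - 1)
            + 2*(k:ℝ) * Dd (fun j => b j - e j) r := by
  set d : ℕ → ℝ := fun j => b j - e j with hd
  set ae : ℕ → ℝ := fun j => a j + e j with hae
  have hDle : ∀ r, Dd d r ≤ d r := Dd_le hd0 hdm
  have hD0 : ∀ r, 0 ≤ Dd d r := Dd_nonneg hd0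
  intro r
  induction r with
  | zero =>
    intro k u
    have : Dd d 0 = 0 := rfl
    simp only [G, this]
    norm_num
  | succ r ih =>
    intro k u
    rcases Nat.eq_zero_or_pos k with rfl | hk
    · norm_num
    obtain ⟨k, rfl⟩ : ∃ k', k = k' + 1 := ⟨k - 1, (Nat.succ_pred_eq_of_pos hk).symm⟩
    have hGa : ∀ V : ℝ, G a b (r+1) V
        = max (a r + (V + 2*(r:ℝ)) * b r + G a b r V)
              (-(a r + V * b r) + G a b r (V+2)) := fun _ => rfl
    have hGb : ∀ V : ℝ, G ae b (r+1) V
        = max ((a r + e r) + (V + 2*(r:ℝ)) * b r + G ae b r V)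
              (-((a r + e r) + V * b r) + G ae b r (V+2)) := fun _ => rfl
    have hDd1 : Dd d (r+1) = d r := rfl
    rw [hGa, hGa, hGb, hGb, hDd1]
    have hdr : Dd d r ≤ d r := hDle r
    have hdr' : 0 ≤ d r := hd0 r
    have hkd : 0 ≤ (k:ℝ) * d r := mul_nonneg (Nat.cast_nonneg k) hdr'
    have hdef : d r = b r - e r := rfl
    have harg1 : (u + 2*(((k+1):ℕ):ℝ)) + 2 = u + 2*(((k+2):ℕ):ℝ) := by push_cast; ring
    have harg2 : (u + 2) + 2*((k:ℕ):ℝ) = u + 2*(((k+1):ℕ):ℝ) := by push_cast; ring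
    have harg3 : (u + 2) + 2*((k:ℕ):ℝ) - 1 = (u + 2*(((k+1):ℕ):ℝ) - 1) := by push_cast; ring
    have harg4 : (u + 2) + 2*(((k+1):ℕ):ℝ) = (u + 2*(((k+1):ℕ):ℝ)) + 2 := by push_cast; ring
    have harg5 : (u + 2) + 2*(((k+1):ℕ):ℝ) - 1 = (u + 2*(((k+1):ℕ):ℝ) - 1) + 2 := by
      push_cast; ring
    refine max_add_max_le ?_ ?_ ?_ ?_
    · -- (A1, B1) ↦ (C1, D1) via IH (k+1) u
      have h := ih (k+1) u
      have goal1 : a r + ((u + 2*(((k+1):ℕ):ℝ)) + 2*(r:ℝ)) * b r + G a b r (u + 2*(((k+1):ℕ):ℝ))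
          + ((a r + e r) + ((u - 1) + 2*(r:ℝ)) * b r + G ae b r (u - 1))
          ≤ (a r + (u + 2*(r:ℝ)) * b r + G a b r u)
            + ((a r + e r) + ((u + 2*(((k+1):ℕ):ℝ) - 1) + 2*(r:ℝ)) * b r
               + G ae b r (u + 2*(((k+1):ℕ):ℝ) - 1)) + 2*(((k+1):ℕ):ℝ) * d r := by
        have hcoef : 2*(((k+1):ℕ):ℝ) * Dd d r ≤ 2*(((k+1):ℕ):ℝ) * d r := by
          apply mul_le_mul_of_nonneg_left hdr
          positivity
        nlinarith [h]
      refine le_trans (le_of_eq ?_) (goal1.trans ?_)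
      · ring
      · have := le_max_left (a r + (u + 2*(r:ℝ)) * b r + G a b r u)
            (-(a r + u * b r) + G a b r (u+2))
        have := le_max_left ((a r + e r) + ((u + 2*(((k+1):ℕ):ℝ) - 1) + 2*(r:ℝ)) * b r
               + G ae b r (u + 2*(((k+1):ℕ):ℝ) - 1))
            (-((a r + e r) + (u + 2*(((k+1):ℕ):ℝ) - 1) * b r)
               + G ae b r ((u + 2*(((k+1):ℕ):ℝ) - 1)+2))
        linarith
    · -- (A1, B2) ↦ (C2, D1) via IH k (u+2)
      have h := ih k (u+2)
      rw [harg2] at h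
      rw [show u + 2 - 1 = u - 1 + 2 from by ring] at h
      have hle1 := le_max_right (a r + (u + 2*(r:ℝ)) * b r + G a b r u)
            (-(a r + u * b r) + G a b r (u+2))
      have hle2 := le_max_left ((a r + e r) + ((u + 2*(((k+1):ℕ):ℝ) - 1) + 2*(r:ℝ)) * b r
               + G ae b r (u + 2*(((k+1):ℕ):ℝ) - 1))
            (-((a r + e r) + (u + 2*(((k+1):ℕ):ℝ) - 1) * b r)
               + G ae b r ((u + 2*(((k+1):ℕ):ℝ) - 1)+2))
      have hcoef : 2*((k:ℕ):ℝ) * Dd d r ≤ 2*((k:ℕ):ℝ) * d r := by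
        apply mul_le_mul_of_nonneg_left hdr
        positivity
      push_cast at h hle1 hle2 hcoef ⊢
      nlinarith [h, hle1, hle2, hcoef, hkd, hdr', hdef]
    · -- (A2, B1) ↦ (C1, D2) via IH (k+2) u
      have h := ih (k+2) u
      rw [← harg1] at h
      rw [show u + 2*(((k+1):ℕ):ℝ) + 2 - 1 = (u + 2*(((k+1):ℕ):ℝ) - 1) + 2 from by ring] at h
      have hle1 := le_max_left (a r + (u + 2*(r:ℝ)) * b r + G a b r u)
            (-(a r + u * b r) + G a b r (u+2))
      have hle2 := le_max_right ((a r + e r) + ((u + 2*(((k+1):ℕ):ℝ) - 1) + 2*(r:ℝ)) * b r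
               + G ae b r (u + 2*(((k+1):ℕ):ℝ) - 1))
            (-((a r + e r) + (u + 2*(((k+1):ℕ):ℝ) - 1) * b r)
               + G ae b r ((u + 2*(((k+1):ℕ):ℝ) - 1)+2))
      have hcoef : 2*(((k+2):ℕ):ℝ) * Dd d r ≤ 2*(((k+2):ℕ):ℝ) * d r := by
        apply mul_le_mul_of_nonneg_left hdr
        positivity
      push_cast at h hle1 hle2 hcoef ⊢
      nlinarith [h, hle1, hle2, hcoef, hkd, hdr', hdef]
    · -- (A2, B2) ↦ (C2, D2) via IH (k+1) (u+2)
      have h := ih (k+1) (u+2)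
      rw [show u + 2 + 2*(((k+1):ℕ):ℝ) = (u + 2*(((k+1):ℕ):ℝ)) + 2 from by ring] at h
      rw [show u + 2 - 1 = u - 1 + 2 from by ring] at h
      rw [show u + 2*(((k+1):ℕ):ℝ) + 2 - 1 = (u + 2*(((k+1):ℕ):ℝ) - 1) + 2 from by ring] at h
      have hle1 := le_max_right (a r + (u + 2*(r:ℝ)) * b r + G a b r u)
            (-(a r + u * b r) + G a b r (u+2))
      have hle2 := le_max_right ((a r + e r) + ((u + 2*(((k+1):ℕ):ℝ) - 1) + 2*(r:ℝ)) * b r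
               + G ae b r (u + 2*(((k+1):ℕ):ℝ) - 1))
            (-((a r + e r) + (u + 2*(((k+1):ℕ):ℝ) - 1) * b r)
               + G ae b r ((u + 2*(((k+1):ℕ):ℝ) - 1)+2))
      have hcoef : 2*(((k+1):ℕ):ℝ) * Dd d r ≤ 2*(((k+1):ℕ):ℝ) * d r := by
        apply mul_le_mul_of_nonneg_left hdr
        positivity
      push_cast at h hle1 hle2 hcoef ⊢
      nlinarith [h, hle1, hle2, hcoef, hkd, hdr', hdef]

lemma Bkey (a e b : ℕ → ℝ) (hs0 : ∀ j, 0 ≤ b j + e j)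
    (hsm : ∀ i j : ℕ, i ≤ j → b i + e i ≤ b j + e j) :
    ∀ (r k : ℕ) (u : ℝ),
      G a b r (u - 2*(k:ℝ)) + G (fun j => a j + e j) b r (u + 1)
        ≤ G a b r u + G (fun j => a j + e j) b r (u - 2*(k:ℝ) + 1)
            + 2*(k:ℝ) * Dd (fun j => b j + e j) r := by
  set d : ℕ → ℝ := fun j => b j + e j with hd
  set ae : ℕ → ℝ := fun j => a j + e j with hae
  have hDle : ∀ r, Dd d r ≤ d r := Dd_le hs0 hsm
  have hD0 : ∀ r, 0 ≤ Dd d r := Dd_nonneg hs0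
  intro r
  induction r with
  | zero =>
    intro k u
    have : Dd d 0 = 0 := rfl
    simp only [G, this]
    norm_num
  | succ r ih =>
    intro k u
    rcases Nat.eq_zero_or_pos k with rfl | hk
    · norm_num
    obtain ⟨k, rfl⟩ : ∃ k', k = k' + 1 := ⟨k - 1, (Nat.succ_pred_eq_of_pos hk).symm⟩
    have hGa : ∀ V : ℝ, G a b (r+1) V
        = max (a r + (V + 2*(r:ℝ)) * b r + G a b r V)
              (-(a r + V * b r) + G a b r (V+2)) := fun _ => rfl
    have hGb : ∀ V : ℝ, G ae b (r+1) V
        = max ((a r + e r) + (V + 2*(r:ℝ)) * b r + G ae b r V)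
              (-((a r + e r) + V * b r) + G ae b r (V+2)) := fun _ => rfl
    have hDd1 : Dd d (r+1) = d r := rfl
    rw [hGa, hGa, hGb, hGb, hDd1]
    have hdr : Dd d r ≤ d r := hDle r
    have hdr' : 0 ≤ d r := hs0 r
    have hkd : 0 ≤ (k:ℝ) * d r := mul_nonneg (Nat.cast_nonneg k) hdr'
    have hdef : d r = b r + e r := rfl
    refine max_add_max_le ?_ ?_ ?_ ?_
    · -- (A1,B1) ↦ (C1,D1) via IH (k+1) u
      have h := ih (k+1) u
      have hle1 := le_max_left (a r + (u + 2*(r:ℝ)) * b r + G a b r u)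
            (-(a r + u * b r) + G a b r (u+2))
      have hle2 := le_max_left ((a r + e r) + ((u - 2*(((k+1):ℕ):ℝ) + 1) + 2*(r:ℝ)) * b r
               + G ae b r (u - 2*(((k+1):ℕ):ℝ) + 1))
            (-((a r + e r) + (u - 2*(((k+1):ℕ):ℝ) + 1) * b r)
               + G ae b r ((u - 2*(((k+1):ℕ):ℝ) + 1)+2))
      have hcoef : 2*(((k+1):ℕ):ℝ) * Dd d r ≤ 2*(((k+1):ℕ):ℝ) * d r := by
        apply mul_le_mul_of_nonneg_left hdr
        positivity
      push_cast at h hle1 hle2 hcoef ⊢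
      nlinarith [h, hle1, hle2, hcoef, hkd, hdr', hdef]
    · -- (A1,B2) ↦ (C2,D1) via IH (k+2) (u+2)
      have h := ih (k+2) (u+2)
      rw [show u + 2 - 2*(((k+2):ℕ):ℝ) = u - 2*(((k+1):ℕ):ℝ) from by push_cast; ring] at h
      rw [show u + 2 + 1 = u + 1 + 2 from by ring] at h
      rw [show u - 2*(((k+1):ℕ):ℝ) + 1 = u - 2*(((k+1):ℕ):ℝ) + 1 from rfl] at h
      have hle1 := le_max_right (a r + (u + 2*(r:ℝ)) * b r + G a b r u)
            (-(a r + u * b r) + G a b r (u+2))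
      have hle2 := le_max_left ((a r + e r) + ((u - 2*(((k+1):ℕ):ℝ) + 1) + 2*(r:ℝ)) * b r
               + G ae b r (u - 2*(((k+1):ℕ):ℝ) + 1))
            (-((a r + e r) + (u - 2*(((k+1):ℕ):ℝ) + 1) * b r)
               + G ae b r ((u - 2*(((k+1):ℕ):ℝ) + 1)+2))
      have hcoef : 2*(((k+2):ℕ):ℝ) * Dd d r ≤ 2*(((k+2):ℕ):ℝ) * d r := by
        apply mul_le_mul_of_nonneg_left hdr
        positivity
      push_cast at h hle1 hle2 hcoef ⊢
      nlinarith [h, hle1, hle2, hcoef, hkd, hdr', hdef]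
    · -- (A2,B1) ↦ (C1,D2) via IH k u
      have h := ih k u
      rw [show u - 2*((k:ℕ):ℝ) = u - 2*(((k+1):ℕ):ℝ) + 2 from by push_cast; ring] at h
      rw [show u - 2*(((k+1):ℕ):ℝ) + 2 + 1 = u - 2*(((k+1):ℕ):ℝ) + 1 + 2 from by ring] at h
      have hle1 := le_max_left (a r + (u + 2*(r:ℝ)) * b r + G a b r u)
            (-(a r + u * b r) + G a b r (u+2))
      have hle2 := le_max_right ((a r + e r) + ((u - 2*(((k+1):ℕ):ℝ) + 1) + 2*(r:ℝ)) * b r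
               + G ae b r (u - 2*(((k+1):ℕ):ℝ) + 1))
            (-((a r + e r) + (u - 2*(((k+1):ℕ):ℝ) + 1) * b r)
               + G ae b r ((u - 2*(((k+1):ℕ):ℝ) + 1)+2))
      have hcoef : 2*((k:ℕ):ℝ) * Dd d r ≤ 2*((k:ℕ):ℝ) * d r := by
        apply mul_le_mul_of_nonneg_left hdr
        positivity
      push_cast at h hle1 hle2 hcoef ⊢
      nlinarith [h, hle1, hle2, hcoef, hkd, hdr', hdef]
    · -- (A2,B2) ↦ (C2,D2) via IH (k+1) (u+2)
      have h := ih (k+1) (u+2)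
      rw [show u + 2 - 2*(((k+1):ℕ):ℝ) = u - 2*(((k+1):ℕ):ℝ) + 2 from by push_cast; ring] at h
      rw [show u + 2 + 1 = u + 1 + 2 from by ring] at h
      rw [show u - 2*(((k+1):ℕ):ℝ) + 2 + 1 = u - 2*(((k+1):ℕ):ℝ) + 1 + 2 from by ring] at h
      have hle1 := le_max_right (a r + (u + 2*(r:ℝ)) * b r + G a b r u)
            (-(a r + u * b r) + G a b r (u+2))
      have hle2 := le_max_right ((a r + e r) + ((u - 2*(((k+1):ℕ):ℝ) + 1) + 2*(r:ℝ)) * b r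
               + G ae b r (u - 2*(((k+1):ℕ):ℝ) + 1))
            (-((a r + e r) + (u - 2*(((k+1):ℕ):ℝ) + 1) * b r)
               + G ae b r ((u - 2*(((k+1):ℕ):ℝ) + 1)+2))
      have hcoef : 2*(((k+1):ℕ):ℝ) * Dd d r ≤ 2*(((k+1):ℕ):ℝ) * d r := by
        apply mul_le_mul_of_nonneg_left hdr
        positivity
      push_cast at h hle1 hle2 hcoef ⊢
      nlinarith [h, hle1, hle2, hcoef, hkd, hdr', hdef]

/-- when the bonus equals the slope, the bonus chain is a shifted plain chain -/
lemma G_bonus_shift (a e b : ℕ → ℝ) :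
    ∀ (r : ℕ), (∀ j, j < r → e j = b j) → ∀ (v : ℝ),
      G (fun j => a j + e j) b r v = G a b r (v + 1) := by
  intro r
  induction r with
  | zero => intro _ v; rfl
  | succ r ih =>
    intro he v
    have h1 : G (fun j => a j + e j) b (r+1) v
        = max ((a r + e r) + (v + 2*(r:ℝ)) * b r + G (fun j => a j + e j) b r v)
              (-((a r + e r) + v * b r) + G (fun j => a j + e j) b r (v+2)) := rfl
    have h2 : G a b (r+1) (v+1)
        = max (a r + ((v+1) + 2*(r:ℝ)) * b r + G a b r (v+1))
              (-(a r + (v+1) * b r) + G a b r ((v+1)+2)) := rfl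
    rw [h1, h2, ih (fun j hj => he j (Nat.lt_succ_of_lt hj)) v,
      ih (fun j hj => he j (Nat.lt_succ_of_lt hj)) (v+2), he r (Nat.lt_succ_self r)]
    rw [show v + 2 + 1 = v + 1 + 2 from by ring]
    congr 1 <;> ring

end Keys

end UKdV


theorem ukdv_backlund_ultradiscretized (N : ℕ) (hN : 1 ≤ N) (p c : Fin (N + 1) → ℝ)
    (hp0 : ∀ j, 0 ≤ p j) (hpmono : Monotone p)
    (q : Fin (N + 1) → ℝ) (hq : ∀ j, q j = min (p j) 1)
    (f g : ℝ → ℝ → ℝ)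
    (hf : ∀ n i : ℝ, f n i = uperm N fun j m =>
      |p j.castSucc * (n + 2 * ((m : ℕ) : ℝ)) - q j.castSucc * i + c j.castSucc|)
    (hg : ∀ n i : ℝ, g n i = uperm (N + 1) fun j m =>
      |p j * (n + 2 * ((m : ℕ) : ℝ) - 2) - q j * i + c j|) :
    (∀ n i : ℝ,
      f n i + g (n + 1) (i - 1) =
        max (f (n + 1) (i - 1) + g n i - p (Fin.last N) + q (Fin.last N) - 2)
            (f (n - 1) (i - 1) + g (n + 2) i - p (Fin.last N) + q (Fin.last N))) ∧
    (∀ n i : ℝ,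
      (f n i + g (n + 1) (i - 1) =
        max (f (n + 1) (i - 1) + g n i - p (Fin.last N) + q (Fin.last N) - 2)
            (f (n - 1) (i - 1) + g (n + 2) i - p (Fin.last N) + q (Fin.last N))) ↔
      (f n i + g (n + 1) (i - 1) =
        max (f (n + 1) (i - 1) + g n i - p (Fin.last N) - q (Fin.last N))
            (f (n - 1) (i - 1) + g (n + 2) i - p (Fin.last N) + q (Fin.last N)))) := by
  classical
  set w : ℕ → ℝ := fun j => p ⟨min j N, Nat.lt_succ_of_le (Nat.min_le_right j N)⟩ with hw
  set qv : ℕ → ℝ := fun j => q ⟨min j N, Nat.lt_succ_of_le (Nat.min_le_right j N)⟩ with hqv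
  set cv : ℕ → ℝ := fun j => c ⟨min j N, Nat.lt_succ_of_le (Nat.min_le_right j N)⟩ with hcv
  have hw0 : ∀ j, 0 ≤ w j := fun j => hp0 _
  have hwmono : ∀ i j : ℕ, i ≤ j → w i ≤ w j := by
    intro i j hij
    exact hpmono (by simp only [Fin.mk_le_mk]; exact min_le_min hij le_rfl)
  have hqvmin : ∀ j, qv j = min (w j) 1 := fun j => hq _
  have hqv0 : ∀ j, 0 ≤ qv j := by
    intro j; rw [hqvmin j]; exact le_min (hw0 j) zero_le_one
  have hd0 : ∀ j, 0 ≤ w j - qv j := by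
    intro j; rw [hqvmin j]; simp [min_le_left]
  have hdm : ∀ i j : ℕ, i ≤ j → w i - qv i ≤ w j - qv j := by
    intro i j hij
    rw [hqvmin i, hqvmin j]
    rcases le_total (w i) 1 with h1 | h1 <;> rcases le_total (w j) 1 with h2 | h2 <;>
      [rw [min_eq_left h1, min_eq_left h2]; rw [min_eq_left h1, min_eq_right h2];
       rw [min_eq_right h1, min_eq_left h2]; rw [min_eq_right h1, min_eq_right h2]] <;>
      linarith [hwmono i j hij]
  have hs0 : ∀ j, 0 ≤ w j + qv j := fun j => add_nonneg (hw0 j) (hqv0 j)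
  have hsm : ∀ i j : ℕ, i ≤ j → w i + qv i ≤ w j + qv j := by
    intro i j hij
    rw [hqvmin i, hqvmin j]
    exact add_le_add (hwmono i j hij) (min_le_min (hwmono i j hij) le_rfl)
  have hPl : p (Fin.last N) = w N := by
    rw [hw]
    congr 1
    exact Fin.ext (by simp)
  have hQl : q (Fin.last N) = qv N := by
    rw [hqv]
    congr 1
    exact Fin.ext (by simp)
  have main : ∀ n i : ℝ,
      (f n i + g (n + 1) (i - 1) =
        max (f (n + 1) (i - 1) + g n i - w N + qv N - 2)
            (f (n - 1) (i - 1) + g (n + 2) i - w N + qv N)) ∧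
      (f n i + g (n + 1) (i - 1) =
        max (f (n + 1) (i - 1) + g n i - w N - qv N)
            (f (n - 1) (i - 1) + g (n + 2) i - w N + qv N)) := by
    intro n i
    set xa : ℕ → ℝ := fun j => w j * n - qv j * i + cv j with hxa
    set xb : ℕ → ℝ := fun j => xa j + qv j with hxb
    -- row identifications for f-matrices
    have hrow : ∀ j : Fin N, w (j:ℕ) = p j.castSucc ∧ qv (j:ℕ) = q j.castSucc
        ∧ cv (j:ℕ) = c j.castSucc := by
      intro j
      have hj : (⟨min (j:ℕ) N, Nat.lt_succ_of_le (Nat.min_le_right _ N)⟩ : Fin (N+1))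
          = j.castSucc := Fin.ext (by simp [Nat.min_eq_left (le_of_lt j.isLt)])
      exact ⟨by rw [hw]; exact congrArg p hj, by rw [hqv]; exact congrArg q hj,
        by rw [hcv]; exact congrArg c hj⟩
    have hrowg : ∀ j : Fin (N+1), w (j:ℕ) = p j ∧ qv (j:ℕ) = q j ∧ cv (j:ℕ) = c j := by
      intro j
      have hj : (⟨min (j:ℕ) N, Nat.lt_succ_of_le (Nat.min_le_right _ N)⟩ : Fin (N+1)) = j :=
        Fin.ext (by simp [Nat.min_eq_left (Nat.lt_succ_iff.mp j.isLt)])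
      exact ⟨by rw [hw]; exact congrArg p hj, by rw [hqv]; exact congrArg q hj,
        by rw [hcv]; exact congrArg c hj⟩
    have hfa : f n i = UKdV.G xa w N 0 := by
      rw [hf n i, ← UKdV.uperm_eq_G xa w hw0 hwmono N 0]
      congr 1
      funext j m
      obtain ⟨h1, h2, h3⟩ := hrow j
      rw [← h1, ← h2, ← h3]
      congr 1
      rw [hxa]
      ring
    have hfb1 : f (n+1) (i-1) = UKdV.G xb w N 1 := by
      rw [hf (n+1) (i-1), ← UKdV.uperm_eq_G xb w hw0 hwmono N 1]
      congr 1
      funext j m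
      obtain ⟨h1, h2, h3⟩ := hrow j
      rw [← h1, ← h2, ← h3]
      congr 1
      rw [hxb, hxa]
      ring
    have hfbm : f (n-1) (i-1) = UKdV.G xb w N (-1) := by
      rw [hf (n-1) (i-1), ← UKdV.uperm_eq_G xb w hw0 hwmono N (-1)]
      congr 1
      funext j m
      obtain ⟨h1, h2, h3⟩ := hrow j
      rw [← h1, ← h2, ← h3]
      congr 1
      rw [hxb, hxa]
      ring
    have hgb : g (n+1) (i-1) = UKdV.G xb w (N+1) (-1) := by
      rw [hg (n+1) (i-1), ← UKdV.uperm_eq_G xb w hw0 hwmono (N+1) (-1)]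
      congr 1
      funext j m
      obtain ⟨h1, h2, h3⟩ := hrowg j
      rw [← h1, ← h2, ← h3]
      congr 1
      rw [hxb, hxa]
      ring
    have hga0 : g n i = UKdV.G xa w (N+1) (-2) := by
      rw [hg n i, ← UKdV.uperm_eq_G xa w hw0 hwmono (N+1) (-2)]
      congr 1
      funext j m
      obtain ⟨h1, h2, h3⟩ := hrowg j
      rw [← h1, ← h2, ← h3]
      congr 1
      rw [hxa]
      ring
    have hga2 : g (n+2) i = UKdV.G xa w (N+1) 0 := by
      rw [hg (n+2) i, ← UKdV.uperm_eq_G xa w hw0 hwmono (N+1) 0]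
      congr 1
      funext j m
      obtain ⟨h1, h2, h3⟩ := hrowg j
      rw [← h1, ← h2, ← h3]
      congr 1
      rw [hxa]
      ring
    -- expand the (N+1)-sized UKdV.G's one step
    have hG1 : UKdV.G xb w (N+1) (-1)
        = max (xb N + (-1 + 2*(N:ℝ)) * w N + UKdV.G xb w N (-1))
              (-(xb N + (-1) * w N) + UKdV.G xb w N 1) := by
      have h : UKdV.G xb w (N+1) (-1)
          = max (xb N + (-1 + 2*(N:ℝ)) * w N + UKdV.G xb w N (-1))
                (-(xb N + (-1) * w N) + UKdV.G xb w N (-1+2)) := rfl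
      rw [h, show (-1:ℝ) + 2 = 1 from by norm_num]
    have hG0 : UKdV.G xa w (N+1) (-2)
        = max (xa N + (-2 + 2*(N:ℝ)) * w N + UKdV.G xa w N (-2))
              (-(xa N + (-2) * w N) + UKdV.G xa w N 0) := by
      have h : UKdV.G xa w (N+1) (-2)
          = max (xa N + (-2 + 2*(N:ℝ)) * w N + UKdV.G xa w N (-2))
                (-(xa N + (-2) * w N) + UKdV.G xa w N (-2+2)) := rfl
      rw [h, show (-2:ℝ) + 2 = 0 from by norm_num]
    have hG2 : UKdV.G xa w (N+1) 0
        = max (xa N + (0 + 2*(N:ℝ)) * w N + UKdV.G xa w N 0)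
              (-(xa N + 0 * w N) + UKdV.G xa w N 2) := by
      have h : UKdV.G xa w (N+1) 0
          = max (xa N + (0 + 2*(N:ℝ)) * w N + UKdV.G xa w N 0)
                (-(xa N + 0 * w N) + UKdV.G xa w N (0+2)) := rfl
      rw [h, show (0:ℝ) + 2 = 2 from by norm_num]
    -- the key inequalities
    have KA' := UKdV.Akey xa qv w hd0 hdm N 1 0
    rw [show (0:ℝ) + 2*(((1:ℕ)):ℝ) = 2 from by norm_num,
      show (0:ℝ) - 1 = -1 from by norm_num] at KA'
    rw [show (2:ℝ) - 1 = 1 from by norm_num] at KA'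
    rw [← hxb] at KA'
    have hDdA : UKdV.Dd (fun j => w j - qv j) N ≤ w N - qv N := UKdV.Dd_le hd0 hdm N
    have KA : UKdV.G xa w N 2 + UKdV.G xb w N (-1)
        ≤ UKdV.G xa w N 0 + UKdV.G xb w N 1 + 2*(w N - qv N) := by
      push_cast at KA'
      linarith [KA', hDdA]
    have KB' := UKdV.Bkey xa qv w hs0 hsm N 1 0
    rw [show (0:ℝ) - 2*(((1:ℕ)):ℝ) = -2 from by norm_num,
      show (0:ℝ) + 1 = 1 from by norm_num] at KB'
    rw [show (-2:ℝ) + 1 = -1 from by norm_num] at KB'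
    rw [← hxb] at KB'
    have hDdB : UKdV.Dd (fun j => w j + qv j) N ≤ w N + qv N := UKdV.Dd_le hs0 hsm N
    have KB : UKdV.G xa w N (-2) + UKdV.G xb w N 1
        ≤ UKdV.G xa w N 0 + UKdV.G xb w N (-1) + 2*(w N + qv N) := by
      push_cast at KB'
      linarith [KB', hDdB]
    -- abbreviations
    have hxbN : xb N = xa N + qv N := rfl
    have hQ1 : qv N ≤ 1 := by rw [hqvmin N]; exact min_le_right _ _
    have hQP : qv N ≤ w N := by rw [hqvmin N]; exact min_le_left _ _
    -- the case dichotomy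
    have hcase : qv N = 1 ∨ (w N = qv N ∧ UKdV.G xb w N (-1) = UKdV.G xa w N 0
        ∧ UKdV.G xb w N 1 = UKdV.G xa w N 2) := by
      rcases le_total 1 (w N) with h | h
      · left
        rw [hqvmin N, min_eq_right h]
      · right
        have hPeq : w N = qv N := by rw [hqvmin N, min_eq_left h]
        have hbonus : ∀ j, j < N → qv j = w j := by
          intro j hj
          rw [hqvmin j, min_eq_left (le_trans (hwmono j N (le_of_lt hj)) h)]
        have hBA := UKdV.G_bonus_shift xa qv w N hbonus (-1)
        have hCE := UKdV.G_bonus_shift xa qv w N hbonus 1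
        rw [← hxb, show (-1:ℝ) + 1 = 0 from by norm_num] at hBA
        rw [← hxb, show (1:ℝ) + 1 = 2 from by norm_num] at hCE
        exact ⟨hPeq, hBA, hCE⟩
    rw [hfa, hfb1, hfbm, hgb, hga0, hga2, hG1, hG0, hG2]
    set Av := UKdV.G xa w N 0
    set Bv := UKdV.G xb w N (-1)
    set Cv := UKdV.G xb w N 1
    set Ev := UKdV.G xa w N 2
    set Hv := UKdV.G xa w N (-2)
    set X := xa N
    set P := w N
    set Q := qv N
    have hT : ∀ (A B C : ℝ), A + max B C = max (A + B) (A + C) := fun A B C =>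
      (max_add_add_left A B C).symm
    have hT2 : ∀ (B C A : ℝ), max B C + A = max (B + A) (C + A) := fun B C A =>
      (max_add_add_right B C A).symm

    constructor
    · -- first equation
      rw [hxbN]
      apply le_antisymm
      · rw [hT]
        apply max_le
        · refine le_trans ?_ (le_max_right _ _)
          have h := le_max_left (X + (0 + 2*(N:ℝ)) * P + Av) (-(X + 0 * P) + Ev)
          linarith
        · rcases hcase with hQ | ⟨hPQe, hBA, hCE⟩
          · refine le_trans ?_ (le_max_left _ _)
            have h := le_max_right (X + (-2 + 2*(N:ℝ)) * P + Hv) (-(X + -2 * P) + Av)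
            linarith
          · refine le_trans ?_ (le_max_right _ _)
            have h := le_max_right (X + (0 + 2*(N:ℝ)) * P + Av) (-(X + 0 * P) + Ev)
            linarith
      · apply max_le
        · rcases le_total (X + (-2 + 2*(N:ℝ)) * P + Hv) (-(X + -2 * P) + Av) with h | h
          · rw [max_eq_right h]
            refine le_trans ?_ (add_le_add (le_refl Av) (le_max_right _ _))
            linarith
          · rw [max_eq_left h]
            refine le_trans ?_ (add_le_add (le_refl Av) (le_max_left _ _))
            linarith [KB]
        · rcases le_total (X + (0 + 2*(N:ℝ)) * P + Av) (-(X + 0 * P) + Ev) with h | h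
          · rw [max_eq_right h]
            refine le_trans ?_ (add_le_add (le_refl Av) (le_max_right _ _))
            linarith [KA]
          · rw [max_eq_left h]
            refine le_trans ?_ (add_le_add (le_refl Av) (le_max_left _ _))
            linarith
    · -- second equation
      rw [hxbN]
      apply le_antisymm
      · rw [hT]
        apply max_le
        · refine le_trans ?_ (le_max_right _ _)
          have h := le_max_left (X + (0 + 2*(N:ℝ)) * P + Av) (-(X + 0 * P) + Ev)
          linarith
        · refine le_trans ?_ (le_max_left _ _)
          have h := le_max_right (X + (-2 + 2*(N:ℝ)) * P + Hv) (-(X + -2 * P) + Av)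
          linarith
      · apply max_le
        · rcases le_total (X + (-2 + 2*(N:ℝ)) * P + Hv) (-(X + -2 * P) + Av) with h | h
          · rw [max_eq_right h]
            refine le_trans ?_ (add_le_add (le_refl Av) (le_max_right _ _))
            linarith
          · rw [max_eq_left h]
            refine le_trans ?_ (add_le_add (le_refl Av) (le_max_left _ _))
            linarith [KB]
        · rcases le_total (X + (0 + 2*(N:ℝ)) * P + Av) (-(X + 0 * P) + Ev) with h | h
          · rw [max_eq_right h]
            refine le_trans ?_ (add_le_add (le_refl Av) (le_max_right _ _))
            linarith [KA]
          · rw [max_eq_left h]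
            refine le_trans ?_ (add_le_add (le_refl Av) (le_max_left _ _))
            linarith
  rw [hPl, hQl]
  exact ⟨fun n i => (main n i).1, fun n i => iff_of_true ((main n i).1) ((main n i).2)⟩
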